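/- Let G = (V,E) be a finite simple graph with star number γ(G) = k, let v ∈ V, and let X be a nonempty finite set of new vertices disjoint from V. Let G' be the graph on V ∪ X whose edges are the edges of G, together with all edges xu for x ∈ X and u ∈ N_G(v), all edges xv for x ∈ X, and all edges between distinct vertices of X (so that the vertices of {v} ∪ X are pairwise true twins in G'). Then γ(G') ≤ k + 1. -/

import Mathlib

open SimpleGraph

/-- A `k`-witness for a simple graph `G`: a positive weight function `w` on the vertices
together with `k` increasingly ordered intervals `[a i, b i]` of positive reals such that
two distinct vertices are adjacent iff the sum of their weights lies in ⋃ i, [a i, b i]. -/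
structure StarWitness {V : Type*} (G : SimpleGraph V) (k : ℕ) where
  w : V → ℝ
  a : Fin k → ℝ
  b : Fin k → ℝ
  w_pos : ∀ v, 0 < w v
  a_pos : ∀ i, 0 < a i
  a_le_b : ∀ i, a i ≤ b i
  ordered : ∀ i j : Fin k, i < j → b i < a j
  adj_iff : ∀ u v : V, u ≠ v →
    (G.Adj u v ↔ ∃ i : Fin k, a i ≤ w u + w v ∧ w u + w v ≤ b i)

/-- The star number `γ(G)` of a graph `G`: the smallest positive integer `k` such that
`G` admits a `k`-witness (i.e. `G` is a star-`k`-PCG). -/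
noncomputable def starNumber {V : Type*} (G : SimpleGraph V) : ℕ :=
  sInf {k | 0 < k ∧ Nonempty (StarWitness G k)}

/-- A witness is left-free if the weight of every non-edge exceeds `b 1` (the right endpoint
of the first interval). -/
def StarWitness.LeftFree {V : Type*} {G : SimpleGraph V} {k : ℕ}
    (W : StarWitness G k) : Prop :=
  ∀ u v : V, u ≠ v → ¬ G.Adj u v → ∀ i : Fin k, (i : ℕ) = 0 → W.b i < W.w u + W.w v

/-- A witness is right-free if the weight of every non-edge is below `a k` (the left endpoint
of the last interval). -/
def StarWitness.RightFree {V : Type*} {G : SimpleGraph V} {k : ℕ}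
    (W : StarWitness G k) : Prop :=
  ∀ u v : V, u ≠ v → ¬ G.Adj u v → ∀ i : Fin k, (i : ℕ) = k - 1 → W.w u + W.w v < W.a i

/-- A witness is in normal form if all weights are pairwise distinct and no doubled weight
equals the sum of the weights of two distinct vertices. -/
def StarWitness.NormalForm {V : Type*} {G : SimpleGraph V} {k : ℕ}
    (W : StarWitness G k) : Prop :=
  Function.Injective W.w ∧
    ∀ x u₁ u₂ : V, u₁ ≠ u₂ → 2 * W.w x ≠ W.w u₁ + W.w u₂

/-- The graph obtained from `G` by adding the vertices of `X` as true twins of `v`: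
each new vertex is adjacent to `v`, to all neighbors of `v` in `G`, and to every
other new vertex. -/
def addTrueTwins {V : Type*} (X : Type*) (G : SimpleGraph V) (v : V) :
    SimpleGraph (V ⊕ X) where
  Adj a b :=
    match a, b with
    | Sum.inl u₁, Sum.inl u₂ => G.Adj u₁ u₂
    | Sum.inl u, Sum.inr _ => G.Adj v u ∨ u = v
    | Sum.inr _, Sum.inl u => G.Adj v u ∨ u = v
    | Sum.inr x, Sum.inr y => x ≠ y
  symm := by
    constructor
    rintro (u | x) (u' | y) h
    · exact h.symm
    · exact h
    · exact h
    · exact h.symm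
  loopless := by
    constructor
    rintro (u | x) h
    · exact G.irrefl h
    · exact h rfl


lemma pow3_lt {i j : ℕ} (h : i < j) : 3^i + 3^i < 3^j := by
  have h0 : 0 < (3:ℕ)^i := Nat.pow_pos (by norm_num)
  have h1 : (3:ℕ)^(i+1) ≤ 3^j := Nat.pow_le_pow_right (by norm_num) h
  have h2 : (3:ℕ)^(i+1) = 3^i * 3 := pow_succ 3 i
  omega

lemma pow3_two {n m p : ℕ} (hnm : n < m) (h : 3^n + 3^m = 3^p + 3^p) : False := by
  have h0 : 0 < (3:ℕ)^n := Nat.pow_pos (by norm_num)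
  have h0' : 0 < (3:ℕ)^m := Nat.pow_pos (by norm_num)
  have h0'' : 0 < (3:ℕ)^p := Nat.pow_pos (by norm_num)
  rcases Nat.lt_or_ge p m with h3 | h3
  · have e := pow3_lt h3
    omega
  · have e1 : (3:ℕ)^m ≤ 3^p := Nat.pow_le_pow_right (by norm_num) h3
    have e2 := pow3_lt hnm
    omega

lemma pow3_mono {i j p q : ℕ} (hij : i < j) (hpq : p < q)
    (h : 3^i + 3^j = 3^p + 3^q) : i = p ∧ j = q := by
  have hjq : j = q := by
    rcases lt_trichotomy j q with hl | he | hg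
    · have e1 : (3:ℕ)^i ≤ 3^j := Nat.pow_le_pow_right (by norm_num) hij.le
      have e2 := pow3_lt hl
      have e3 : 0 < (3:ℕ)^p := Nat.pow_pos (by norm_num)
      omega
    · exact he
    · have e1 : (3:ℕ)^p ≤ 3^q := Nat.pow_le_pow_right (by norm_num) hpq.le
      have e2 := pow3_lt hg
      have e3 : 0 < (3:ℕ)^i := Nat.pow_pos (by norm_num)
      omega
  subst hjq
  have : (3:ℕ)^i = 3^p := by omega
  exact ⟨Nat.pow_right_injective (by norm_num) this, rfl⟩

lemma pow3_unique {i j p q : ℕ} (hij : i ≠ j) (h : 3^i + 3^j = 3^p + 3^q) :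
    (i = p ∧ j = q) ∨ (i = q ∧ j = p) := by
  have hpq : p ≠ q := by
    rintro rfl
    rcases Nat.lt_or_ge i j with hl | hg
    · exact pow3_two hl h
    · have hl : j < i := by omega
      have h' : 3^j + 3^i = 3^p + 3^p := by omega
      exact pow3_two hl h'
  rcases Nat.lt_or_ge i j with hl | hg
  · rcases Nat.lt_or_ge p q with h2 | h2
    · exact Or.inl (pow3_mono hl h2 h)
    · have h2 : q < p := by omega
      have := pow3_mono hl h2 (by omega)
      tauto
  · have hl : j < i := by omega
    rcases Nat.lt_or_ge p q with h2 | h2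
    · have := pow3_mono hl h2 (by omega)
      tauto
    · have h2 : q < p := by omega
      have := pow3_mono hl h2 (by omega)
      tauto

lemma exists_witness {V : Type*} [Fintype V] (G : SimpleGraph V) :
    ∃ m, 0 < m ∧ Nonempty (StarWitness G m) := by
  classical
  obtain ⟨e⟩ := Fintype.truncEquivFin V |>.nonempty
  set w : V → ℝ := fun u => ((3^((e u : ℕ)) : ℕ) : ℝ) with hw
  have hw1 : ∀ u, (1:ℝ) ≤ w u := by
    intro u
    have h : (1:ℕ) ≤ 3^((e u : ℕ)) := Nat.one_le_pow _ _ (by norm_num)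
    show (1:ℝ) ≤ ((3^((e u : ℕ)) : ℕ) : ℝ)
    exact_mod_cast h
  have hwpos : ∀ u, (0:ℝ) < w u := fun u => lt_of_lt_of_le one_pos (hw1 u)
  set T : Finset ℝ := insert 1
    ((Finset.univ.filter (fun p : V × V => G.Adj p.1 p.2)).image
      (fun p => w p.1 + w p.2)) with hT
  have hTne : T.Nonempty := ⟨1, Finset.mem_insert_self _ _⟩
  have hTpos : ∀ t ∈ T, (0:ℝ) < t := by
    intro t ht
    rcases Finset.mem_insert.1 ht with rfl | ht
    · norm_num
    · obtain ⟨p, -, rfl⟩ := Finset.mem_image.1 ht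
      exact add_pos (hwpos _) (hwpos _)
  have hcard : 0 < T.card := Finset.card_pos.2 hTne
  set iso := T.orderIsoOfFin rfl with hiso
  refine ⟨T.card, hcard, ⟨⟨w, fun i => iso i, fun i => iso i, hwpos,
    fun i => hTpos _ (iso i).2, fun i => le_refl _, ?_, ?_⟩⟩⟩
  · intro i j hij
    exact_mod_cast iso.strictMono hij
  · intro u u' hne
    constructor
    · intro hAdj
      have hmem : w u + w u' ∈ T := by
        refine Finset.mem_insert_of_mem (Finset.mem_image.2 ⟨(u, u'), ?_, rfl⟩)
        simp [hAdj]
      refine ⟨iso.symm ⟨_, hmem⟩, ?_, ?_⟩ <;>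
        simp [OrderIso.apply_symm_apply]
    · rintro ⟨i, h1, h2⟩
      have heq : w u + w u' = (iso i : ℝ) := le_antisymm h2 h1
      have hmem : w u + w u' ∈ T := heq ▸ (iso i).2
      rcases Finset.mem_insert.1 hmem with h3 | h3
      · exfalso
        have := hw1 u; have := hw1 u'
        linarith
      · obtain ⟨p, hp, hpe⟩ := Finset.mem_image.1 h3
        have hadj : G.Adj p.1 p.2 := (Finset.mem_filter.1 hp).2
        have hcast : 3^((e u : ℕ)) + 3^((e u' : ℕ))
            = 3^((e p.1 : ℕ)) + 3^((e p.2 : ℕ)) := by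
          have : w u + w u' = w p.1 + w p.2 := hpe.symm
          simp only [hw] at this
          exact_mod_cast this
        have hij : (e u : ℕ) ≠ (e u' : ℕ) := by
          intro h
          exact hne (e.injective (Fin.val_injective h))
        rcases pow3_unique hij hcast with ⟨h4, h5⟩ | ⟨h4, h5⟩
        · have : u = p.1 := e.injective (Fin.val_injective h4)
          have : u' = p.2 := e.injective (Fin.val_injective h5)
          subst_vars; exact hadj
        · have : u = p.2 := e.injective (Fin.val_injective h4)
          have : u' = p.1 := e.injective (Fin.val_injective h5)
          subst_vars; exact hadj.symm

lemma insert_witness {V' : Type*} (H : SimpleGraph V') {k : ℕ} (a b : Fin k → ℝ)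
    (ha : ∀ i, 0 < a i) (hab : ∀ i, a i ≤ b i) (hord : ∀ i j : Fin k, i < j → b i < a j)
    (s : ℝ) (hs : 0 < s) (hout : ∀ i, s < a i ∨ b i < s)
    (f : V' → ℝ) (hf : ∀ u, 0 < f u)
    (hadj : ∀ u u' : V', u ≠ u' →
      (H.Adj u u' ↔ (∃ i, a i ≤ f u + f u' ∧ f u + f u' ≤ b i) ∨ f u + f u' = s)) :
    Nonempty (StarWitness H (k+1)) := by
  classical
  set S : Finset (Fin k) := Finset.univ.filter (fun i => b i < s) with hS
  set j : ℕ := S.card with hj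
  have hjk : j ≤ k := by
    calc S.card ≤ (Finset.univ : Finset (Fin k)).card := Finset.card_filter_le _ _
    _ = k := by simp
  have hdc : ∀ i i' : Fin k, i' ≤ i → i ∈ S → i' ∈ S := by
    intro i i' hle hi
    have hbi : b i < s := (Finset.mem_filter.1 hi).2
    rcases eq_or_lt_of_le hle with rfl | hlt
    · exact hi
    · exact Finset.mem_filter.2 ⟨Finset.mem_univ _,
        lt_trans (lt_of_lt_of_le (hord _ _ hlt) (hab i)) hbi⟩
  have hbs : ∀ i : Fin k, b i < s ↔ (i : ℕ) < j := by
    intro i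
    constructor
    · intro h
      have hsub : Finset.Iic i ⊆ S := fun x hx =>
        hdc i x (Finset.mem_Iic.1 hx) (Finset.mem_filter.2 ⟨Finset.mem_univ _, h⟩)
      have := Finset.card_le_card hsub
      rw [Fin.card_Iic] at this
      omega
    · intro h
      by_contra hc
      have hsub : S ⊆ Finset.Iio i := by
        intro x hx
        rw [Finset.mem_Iio]
        by_contra hxi
        exact hc (Finset.mem_filter.1 (hdc x i (le_of_not_gt hxi) hx)).2
      have := Finset.card_le_card hsub
      rw [Fin.card_Iio] at this
      omega
  have has : ∀ i : Fin k, j ≤ (i : ℕ) → s < a i := by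
    intro i hi
    rcases hout i with h | h
    · exact h
    · exact absurd ((hbs i).1 h) (by omega)
  set a' : Fin (k+1) → ℝ := fun m =>
    if h : (m : ℕ) < j then a ⟨m, lt_of_lt_of_le h hjk⟩
    else if h2 : (m : ℕ) = j then s
    else a ⟨(m : ℕ) - 1, by omega⟩ with ha'
  set b' : Fin (k+1) → ℝ := fun m =>
    if h : (m : ℕ) < j then b ⟨m, lt_of_lt_of_le h hjk⟩
    else if h2 : (m : ℕ) = j then s
    else b ⟨(m : ℕ) - 1, by omega⟩ with hb'
  have ea1 : ∀ (m : Fin (k+1)) (h : (m:ℕ) < j), a' m = a ⟨m, lt_of_lt_of_le h hjk⟩ := by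
    intro m h; simp only [ha']; rw [dif_pos h]
  have eb1 : ∀ (m : Fin (k+1)) (h : (m:ℕ) < j), b' m = b ⟨m, lt_of_lt_of_le h hjk⟩ := by
    intro m h; simp only [hb']; rw [dif_pos h]
  have ea2 : ∀ (m : Fin (k+1)), (m:ℕ) = j → a' m = s := by
    intro m h; simp only [ha']; rw [dif_neg (by omega), dif_pos h]
  have eb2 : ∀ (m : Fin (k+1)), (m:ℕ) = j → b' m = s := by
    intro m h; simp only [hb']; rw [dif_neg (by omega), dif_pos h]
  have ea3 : ∀ (m : Fin (k+1)) (h1 : j < (m:ℕ)) (hk : (m:ℕ)-1 < k),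
      a' m = a ⟨(m:ℕ)-1, hk⟩ := by
    intro m h1 hk; simp only [ha']; rw [dif_neg (by omega), dif_neg (by omega)]
  have eb3 : ∀ (m : Fin (k+1)) (h1 : j < (m:ℕ)) (hk : (m:ℕ)-1 < k),
      b' m = b ⟨(m:ℕ)-1, hk⟩ := by
    intro m h1 hk; simp only [hb']; rw [dif_neg (by omega), dif_neg (by omega)]
  refine ⟨⟨f, a', b', hf, ?_, ?_, ?_, ?_⟩⟩
  · intro m
    rcases lt_trichotomy ((m:ℕ)) j with h | h | h
    · rw [ea1 m h]; exact ha _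
    · rw [ea2 m h]; exact hs
    · rw [ea3 m h (by omega)]; exact ha _
  · intro m
    rcases lt_trichotomy ((m:ℕ)) j with h | h | h
    · rw [ea1 m h, eb1 m h]; exact hab _
    · rw [ea2 m h, eb2 m h]
    · rw [ea3 m h (by omega), eb3 m h (by omega)]; exact hab _
  · intro m m' hlt
    have hv : (m : ℕ) < (m' : ℕ) := hlt
    rcases lt_trichotomy ((m:ℕ)) j with h1 | h1 | h1 <;>
      rcases lt_trichotomy ((m':ℕ)) j with h2 | h2 | h2
    · rw [eb1 m h1, ea1 m' h2]
      exact hord _ _ (Fin.mk_lt_mk.2 hv)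
    · rw [eb1 m h1, ea2 m' h2]
      exact (hbs ⟨(m:ℕ), by omega⟩).2 h1
    · rw [eb1 m h1, ea3 m' h2 (by omega)]
      exact hord _ _ (Fin.mk_lt_mk.2 (by omega))
    · omega
    · omega
    · rw [eb2 m h1, ea3 m' h2 (by omega)]
      have hle : j ≤ (m':ℕ) - 1 := by omega
      exact has ⟨(m':ℕ)-1, by omega⟩ hle
    · omega
    · omega
    · rw [eb3 m h1 (by omega), ea3 m' h2 (by omega)]
      exact hord _ _ (Fin.mk_lt_mk.2 (by omega))
  · intro u u' hne
    rw [hadj u u' hne]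
    constructor
    · rintro (⟨i, h1, h2⟩ | heq)
      · by_cases hc : (i : ℕ) < j
        · refine ⟨⟨(i:ℕ), by omega⟩, ?_, ?_⟩
          · rw [ea1 _ hc]; exact h1
          · rw [eb1 _ hc]; exact h2
        · refine ⟨⟨(i:ℕ)+1, by omega⟩, ?_, ?_⟩
          · rw [ea3 _ (by simp only [Fin.val_mk]; omega) (by simp only [Fin.val_mk]; omega)]; exact h1
          · rw [eb3 _ (by simp only [Fin.val_mk]; omega) (by simp only [Fin.val_mk]; omega)]; exact h2
      · refine ⟨⟨j, by omega⟩, ?_, ?_⟩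
        · rw [ea2 _ rfl]; exact le_of_eq heq.symm
        · rw [eb2 _ rfl]; exact le_of_eq heq
    · rintro ⟨m, h1, h2⟩
      rcases lt_trichotomy ((m:ℕ)) j with h | h | h
      · rw [ea1 m h] at h1; rw [eb1 m h] at h2
        exact Or.inl ⟨_, h1, h2⟩
      · rw [ea2 m h] at h1; rw [eb2 m h] at h2
        exact Or.inr (le_antisymm h2 h1)
      · rw [ea3 m h (by omega)] at h1; rw [eb3 m h (by omega)] at h2
        exact Or.inl ⟨_, h1, h2⟩

lemma twin_witness {V X : Type*} [Fintype V] [Fintype X] [Nonempty X]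
    (G : SimpleGraph V) (v : V) {k : ℕ} (W : StarWitness G k) :
    Nonempty (StarWitness (addTrueTwins X G v) (k+1)) := by
  classical
  obtain ⟨w, a, b, hwpos, hapos, hab, hord, hadj⟩ := W
  set H := addTrueTwins X G v with hH
  have hAdjII : ∀ p q : V, H.Adj (Sum.inl p) (Sum.inl q) ↔ G.Adj p q := fun p q => Iff.rfl
  have hAdjIR : ∀ (p : V) (x : X), H.Adj (Sum.inl p) (Sum.inr x) ↔ (G.Adj v p ∨ p = v) :=
    fun p x => Iff.rfl
  have hAdjRI : ∀ (x : X) (p : V), H.Adj (Sum.inr x) (Sum.inl p) ↔ (G.Adj v p ∨ p = v) :=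
    fun x p => Iff.rfl
  have hAdjRR : ∀ x y : X, H.Adj (Sum.inr x) (Sum.inr y) ↔ x ≠ y := fun x y => Iff.rfl
  have KA : ∀ p q : V, G.Adj p q → ∃ i, a i ≤ w p + w q ∧ w p + w q ≤ b i := by
    intro p q h
    exact (hadj p q h.ne).1 h
  by_cases hc : ∃ i, a i ≤ 2 * w v ∧ 2 * w v ≤ b i
  · -- easy case : 2 w v is already covered by an interval
    set f : V ⊕ X → ℝ := Sum.elim w (fun _ => w v) with hf
    have hfpos : ∀ u, 0 < f u := by
      rintro (p | x) <;> exact hwpos _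
    set T : Finset ℝ := (Finset.image b Finset.univ) ∪
      (Finset.image (fun p : (V ⊕ X) × (V ⊕ X) => f p.1 + f p.2) Finset.univ) with hT
    have hmemT : f (Sum.inl v) + f (Sum.inl v) ∈ T :=
      Finset.mem_union_right _ (Finset.mem_image.2 ⟨(Sum.inl v, Sum.inl v), Finset.mem_univ _, rfl⟩)
    have hTne : T.Nonempty := ⟨_, hmemT⟩
    set M : ℝ := T.max' hTne + 1 with hM
    have hbM : ∀ i, b i < M := by
      intro i
      have : b i ≤ T.max' hTne :=
        Finset.le_max' _ _ (Finset.mem_union_left _ (Finset.mem_image.2 ⟨i, Finset.mem_univ _, rfl⟩))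
      linarith
    have hsumM : ∀ p q : V ⊕ X, f p + f q < M := by
      intro p q
      have hm : f p + f q ∈ T := Finset.mem_union_right _
        (Finset.mem_image.2 ⟨(p, q), Finset.mem_univ _, rfl⟩)
      have : f p + f q ≤ T.max' hTne := Finset.le_max' _ _ hm
      linarith
    have hM0 : 0 < M := by
      have h1 : f (Sum.inl v) + f (Sum.inl v) ≤ T.max' hTne := Finset.le_max' _ _ hmemT
      have h2 := hfpos (Sum.inl v)
      linarith
    refine insert_witness H a b hapos hab hord M hM0 (fun i => Or.inr (hbM i)) f hfpos ?_
    rintro (p | x) (q | y) hne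
    · have hpq : p ≠ q := fun h => hne (congrArg _ h)
      rw [hAdjII]
      rw [hadj p q hpq]
      constructor
      · exact fun h => Or.inl h
      · rintro (h | h)
        · exact h
        · exact absurd h (ne_of_lt (hsumM _ _))
    · rw [hAdjIR]
      show _ ↔ (∃ i, a i ≤ w p + w v ∧ w p + w v ≤ b i) ∨ w p + w v = M
      by_cases hpv : p = v
      · rw [hpv]
        constructor
        · intro _
          refine Or.inl ?_
          obtain ⟨i, h1, h2⟩ := hc
          exact ⟨i, by linarith [two_mul (w v)], by linarith [two_mul (w v)]⟩
        · intro _; exact Or.inr rfl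
      · rw [or_iff_left hpv, hadj v p (Ne.symm hpv)]
        constructor
        · intro h; exact Or.inl (by rwa [add_comm] at h)
        · rintro (h | h)
          · rwa [add_comm] at h
          · exact absurd h (ne_of_lt (hsumM (Sum.inl p) (Sum.inr y)))
    · rw [hAdjRI]
      show _ ↔ (∃ i, a i ≤ w v + w q ∧ w v + w q ≤ b i) ∨ w v + w q = M
      by_cases hpv : q = v
      · rw [hpv]
        constructor
        · intro _
          refine Or.inl ?_
          obtain ⟨i, h1, h2⟩ := hc
          exact ⟨i, by linarith [two_mul (w v)], by linarith [two_mul (w v)]⟩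
        · intro _; exact Or.inr rfl
      · rw [or_iff_left hpv, hadj v q (Ne.symm hpv)]
        constructor
        · intro h; exact Or.inl h
        · rintro (h | h)
          · exact h
          · exact absurd h (ne_of_lt (hsumM (Sum.inr x) (Sum.inl q)))
    · rw [hAdjRR]
      show _ ↔ (∃ i, a i ≤ w v + w v ∧ w v + w v ≤ b i) ∨ w v + w v = M
      constructor
      · intro _
        obtain ⟨i, h1, h2⟩ := hc
        exact Or.inl ⟨i, by linarith [two_mul (w v)], by linarith [two_mul (w v)]⟩
      · intro _
        exact fun h => hne (congrArg _ h)
  · -- hard case : 2 w v lies outside all intervals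
    have hout2 : ∀ i, 2 * w v < a i ∨ b i < 2 * w v := by
      intro i
      rcases lt_or_ge (2 * w v) (a i) with h | h
      · exact Or.inl h
      · rcases lt_or_ge (b i) (2 * w v) with h2 | h2
        · exact Or.inr h2
        · exact absurd ⟨h, h2⟩ (fun hx => hc ⟨i, hx⟩)
    set NA : Finset ℝ := insert (2 * w v)
      ((Finset.univ.filter (fun p : V × V => p.1 ≠ p.2 ∧ ¬ G.Adj p.1 p.2)).image
        (fun p => w p.1 + w p.2)) with hNAdef
    have KN : ∀ p q : V, p ≠ q → ¬ G.Adj p q → (w p + w q) ∈ NA := by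
      intro p q h1 h2
      exact Finset.mem_insert_of_mem (Finset.mem_image.2
        ⟨(p, q), Finset.mem_filter.2 ⟨Finset.mem_univ _, h1, h2⟩, rfl⟩)
    have hNA : ∀ t ∈ NA, ∀ i, t < a i ∨ b i < t := by
      intro t ht i
      rcases Finset.mem_insert.1 ht with rfl | ht
      · exact hout2 i
      · obtain ⟨p, hp, rfl⟩ := Finset.mem_image.1 ht
        obtain ⟨-, h1, h2⟩ := Finset.mem_filter.1 hp
        have := (hadj p.1 p.2 h1).not.1 h2
        push_neg at this
        rcases lt_or_ge (w p.1 + w p.2) (a i) with h | h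
        · exact Or.inl h
        · exact Or.inr (this i h)
    -- choose δ
    set C : Finset ℝ := insert 1
      ((Finset.image (fun p : Fin k × Fin k => a p.2 - b p.1)
        (Finset.univ.filter (fun p => p.1 < p.2))) ∪
      (Finset.image (fun q : ℝ × Fin k => q.1 - b q.2)
        ((NA ×ˢ Finset.univ).filter (fun q => b q.2 < q.1)))) with hCdef
    have hCne : C.Nonempty := ⟨1, Finset.mem_insert_self _ _⟩
    have hCpos : ∀ c ∈ C, 0 < c := by
      intro c hcmem
      rcases Finset.mem_insert.1 hcmem with rfl | hcmem
      · norm_num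
      · rcases Finset.mem_union.1 hcmem with h | h
        · obtain ⟨p, hp, rfl⟩ := Finset.mem_image.1 h
          have hlt := (Finset.mem_filter.1 hp).2
          have := hord _ _ hlt
          linarith
        · obtain ⟨q, hq, rfl⟩ := Finset.mem_image.1 h
          have hlt := (Finset.mem_filter.1 hq).2
          linarith
    set δ : ℝ := C.min' hCne / 2 with hδdef
    have hδpos : 0 < δ := by
      have : 0 < C.min' hCne := (Finset.lt_min'_iff _ _).2 hCpos
      positivity
    have hδlt : ∀ c ∈ C, δ < c := by
      intro c hcmem
      have h1 : C.min' hCne ≤ c := Finset.min'_le _ _ hcmem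
      have h2 : 0 < C.min' hCne := (Finset.lt_min'_iff _ _).2 hCpos
      rw [hδdef]; linarith
    have hgap : ∀ i i' : Fin k, i < i' → b i + δ < a i' := by
      intro i i' hlt
      have : δ < a i' - b i := hδlt _ (Finset.mem_insert_of_mem (Finset.mem_union_left _
        (Finset.mem_image.2 ⟨(i, i'), Finset.mem_filter.2 ⟨Finset.mem_univ _, hlt⟩, rfl⟩)))
      linarith
    have hmR : ∀ t ∈ NA, ∀ i, b i < t → b i + δ < t := by
      intro t ht i hlt
      have : δ < t - b i := hδlt _ (Finset.mem_insert_of_mem (Finset.mem_union_right _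
        (Finset.mem_image.2 ⟨(t, i), Finset.mem_filter.2
          ⟨Finset.mem_product.2 ⟨ht, Finset.mem_univ _⟩, hlt⟩, rfl⟩)))
      linarith
    -- choose β
    set D : Finset ℝ := insert (2 * δ)
      (Finset.image (fun q : ℝ × Fin k => a q.2 - q.1)
        ((NA ×ˢ Finset.univ).filter (fun q => q.1 < a q.2))) with hDdef
    have hDne : D.Nonempty := ⟨_, Finset.mem_insert_self _ _⟩
    have hDpos : ∀ d ∈ D, 0 < d := by
      intro d hd
      rcases Finset.mem_insert.1 hd with rfl | hd
      · linarith
      · obtain ⟨q, hq, rfl⟩ := Finset.mem_image.1 hd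
        have := (Finset.mem_filter.1 hq).2
        linarith
    set β : ℝ := D.min' hDne / 2 with hβdef
    have hβpos : 0 < β := by
      have : 0 < D.min' hDne := (Finset.lt_min'_iff _ _).2 hDpos
      positivity
    have hβle : ∀ d ∈ D, 2 * β ≤ d := by
      intro d hd
      have := Finset.min'_le _ _ hd
      rw [hβdef]; linarith
    have hβδ : β ≤ δ := by
      have := hβle _ (Finset.mem_insert_self _ _)
      linarith
    have hmL : ∀ t ∈ NA, ∀ i, t < a i → t + 2 * β ≤ a i := by
      intro t ht i hlt
      have : 2 * β ≤ a i - t := hβle _ (Finset.mem_insert_of_mem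
        (Finset.mem_image.2 ⟨(t, i), Finset.mem_filter.2
          ⟨Finset.mem_product.2 ⟨ht, Finset.mem_univ _⟩, hlt⟩, rfl⟩))
      linarith
    -- choose a generic ε
    set Bad : Set ℝ := (Set.range (fun u : V => w u - w v)) ∪
      (Set.range (fun t : {x // x ∈ NA} => ((t : ℝ) - 2 * w v) / 2)) with hBadDef
    have hBadFin : Bad.Finite := (Set.finite_range _).union (Set.finite_range _)
    obtain ⟨ε, hεmem, hεbad⟩ := ((Set.Ioo_infinite hβpos).diff hBadFin).nonempty
    obtain ⟨hε0, hεβ⟩ := hεmem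
    have hεw : ∀ u : V, w u ≠ w v + ε := by
      intro u h
      exact hεbad (Or.inl ⟨u, show w u - w v = ε by linarith⟩)
    have hεt : ∀ t ∈ NA, t ≠ 2 * w v + 2 * ε := by
      intro t ht h
      exact hεbad (Or.inr ⟨⟨t, ht⟩, show (t - 2 * w v) / 2 = ε by linarith⟩)
    have hεδ : ε < δ := lt_of_lt_of_le hεβ hβδ
    set f : V ⊕ X → ℝ :=
      Sum.elim (fun u => if u = v then w v + ε else w u) (fun _ => w v + ε) with hfdef
    have hfpos : ∀ u, 0 < f u := by
      rintro (p | x)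
      · simp only [hfdef, Sum.elim_inl]
        split_ifs
        · linarith [hwpos v]
        · exact hwpos p
      · simp only [hfdef, Sum.elim_inr]
        linarith [hwpos v]
    set s : ℝ := 2 * (w v + ε) with hsdef
    have hs0 : 0 < s := by have := hwpos v; rw [hsdef]; linarith
    -- properties of sums
    have L1 : ∀ t ∈ NA, (∀ i, ¬ (a i ≤ t ∧ t ≤ b i + δ)) ∧ t ≠ s := by
      intro t ht
      constructor
      · intro i ⟨h1, h2⟩
        rcases hNA t ht i with h | h
        · linarith
        · have := hmR t ht i h; linarith
      · rw [hsdef]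
        intro h
        exact hεt t ht (by linarith)
    have L2 : ∀ t ∈ NA, (∀ i, ¬ (a i ≤ t + ε ∧ t + ε ≤ b i + δ)) := by
      intro t ht i ⟨h1, h2⟩
      rcases hNA t ht i with h | h
      · have := hmL t ht i h; linarith
      · have := hmR t ht i h; linarith
    have L3 : ∀ (t : ℝ) i, a i ≤ t → t ≤ b i → a i ≤ t + ε ∧ t + ε ≤ b i + δ := by
      intro t i h1 h2
      exact ⟨by linarith, by linarith⟩
    refine insert_witness H a (fun i => b i + δ) hapos (fun i => by have h1 := hab i; show a i ≤ b i + δ; linarith)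
      (fun i i' h => hgap i i' h) s hs0 ?_ f hfpos ?_
    · intro i
      have h2wv : (2 * w v) ∈ NA := Finset.mem_insert_self _ _
      rcases hNA _ h2wv i with h | h
      · left
        have := hmL _ h2wv i h
        show s < a i
        rw [hsdef]; linarith
      · right
        have := hmR _ h2wv i h
        show b i + δ < s
        rw [hsdef]; linarith
    · rintro (p | x) (q | y) hne
      · -- inl inl
        have hpq : p ≠ q := fun h => hne (congrArg _ h)
        rw [hAdjII]
        show G.Adj p q ↔ (∃ i, a i ≤ f (Sum.inl p) + f (Sum.inl q) ∧
          f (Sum.inl p) + f (Sum.inl q) ≤ b i + δ) ∨ f (Sum.inl p) + f (Sum.inl q) = s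
        by_cases hp : p = v
        · have hqv : q ≠ v := fun h => hpq (hp.trans h.symm)
          have hfe : f (Sum.inl p) + f (Sum.inl q) = (w v + w q) + ε := by
            simp only [hfdef, Sum.elim_inl, if_pos hp, if_neg hqv]; ring
          rw [hfe, hp]
          constructor
          · intro hA
            obtain ⟨i, h1, h2⟩ := KA v q hA
            exact Or.inl ⟨i, L3 _ i h1 h2⟩
          · intro hOr
            by_contra hA
            have htNA : (w v + w q) ∈ NA := KN v q (Ne.symm hqv) hA
            rcases hOr with ⟨i, h1, h2⟩ | h
            · exact L2 _ htNA i ⟨h1, h2⟩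
            · have : w q = w v + ε := by rw [hsdef] at h; linarith
              exact hεw q this
        · by_cases hq : q = v
          · have hfe : f (Sum.inl p) + f (Sum.inl q) = (w p + w v) + ε := by
              simp only [hfdef, Sum.elim_inl, if_pos hq, if_neg hp]; ring
            rw [hfe, hq]
            constructor
            · intro hA
              obtain ⟨i, h1, h2⟩ := KA p v hA
              exact Or.inl ⟨i, L3 _ i h1 h2⟩
            · intro hOr
              by_contra hA
              have htNA : (w p + w v) ∈ NA := KN p v hp hA
              rcases hOr with ⟨i, h1, h2⟩ | h
              · exact L2 _ htNA i ⟨h1, h2⟩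
              · have : w p = w v + ε := by rw [hsdef] at h; linarith
                exact hεw p this
          · have hfe : f (Sum.inl p) + f (Sum.inl q) = w p + w q := by
              simp only [hfdef, Sum.elim_inl, if_neg hp, if_neg hq]
            rw [hfe]
            constructor
            · intro hA
              obtain ⟨i, h1, h2⟩ := KA p q hA
              exact Or.inl ⟨i, h1, by linarith⟩
            · intro hOr
              by_contra hA
              have htNA : (w p + w q) ∈ NA := KN p q hpq hA
              obtain ⟨hL1a, hL1b⟩ := L1 _ htNA
              rcases hOr with ⟨i, h1, h2⟩ | h
              · exact hL1a i ⟨h1, h2⟩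
              · exact hL1b h
      · -- inl inr
        rw [hAdjIR]
        show (G.Adj v p ∨ p = v) ↔ (∃ i, a i ≤ f (Sum.inl p) + f (Sum.inr y) ∧
          f (Sum.inl p) + f (Sum.inr y) ≤ b i + δ) ∨ f (Sum.inl p) + f (Sum.inr y) = s
        by_cases hp : p = v
        · have hfe : f (Sum.inl p) + f (Sum.inr y) = s := by
            simp only [hfdef, Sum.elim_inl, Sum.elim_inr]
            rw [if_pos hp, hsdef]; ring
          rw [hfe]
          simp [hp]
        · rw [or_iff_left hp]
          have hfe : f (Sum.inl p) + f (Sum.inr y) = (w v + w p) + ε := by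
            simp only [hfdef, Sum.elim_inl, Sum.elim_inr, if_neg hp]; ring
          rw [hfe]
          constructor
          · intro hA
            obtain ⟨i, h1, h2⟩ := KA v p hA
            exact Or.inl ⟨i, L3 _ i h1 h2⟩
          · intro hOr
            by_contra hA
            have htNA : (w v + w p) ∈ NA := KN v p (Ne.symm hp) hA
            rcases hOr with ⟨i, h1, h2⟩ | h
            · exact L2 _ htNA i ⟨h1, h2⟩
            · have : w p = w v + ε := by rw [hsdef] at h; linarith
              exact hεw p this
      · -- inr inl
        rw [hAdjRI]
        show (G.Adj v q ∨ q = v) ↔ (∃ i, a i ≤ f (Sum.inr x) + f (Sum.inl q) ∧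
          f (Sum.inr x) + f (Sum.inl q) ≤ b i + δ) ∨ f (Sum.inr x) + f (Sum.inl q) = s
        by_cases hq : q = v
        · have hfe : f (Sum.inr x) + f (Sum.inl q) = s := by
            simp only [hfdef, Sum.elim_inl, Sum.elim_inr]
            rw [if_pos hq, hsdef]; ring
          rw [hfe]
          simp [hq]
        · rw [or_iff_left hq]
          have hfe : f (Sum.inr x) + f (Sum.inl q) = (w v + w q) + ε := by
            simp only [hfdef, Sum.elim_inl, Sum.elim_inr, if_neg hq]; ring
          rw [hfe]
          constructor
          · intro hA
            obtain ⟨i, h1, h2⟩ := KA v q hA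
            exact Or.inl ⟨i, L3 _ i h1 h2⟩
          · intro hOr
            by_contra hA
            have htNA : (w v + w q) ∈ NA := KN v q (Ne.symm hq) hA
            rcases hOr with ⟨i, h1, h2⟩ | h
            · exact L2 _ htNA i ⟨h1, h2⟩
            · have : w q = w v + ε := by rw [hsdef] at h; linarith
              exact hεw q this
      · -- inr inr
        have hxy : x ≠ y := fun h => hne (congrArg _ h)
        rw [hAdjRR]
        have hfe : f (Sum.inr x) + f (Sum.inr y) = s := by
          simp only [hfdef, Sum.elim_inr, hsdef]; ring
        rw [hfe]
        simp [hxy]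

/-- Theorem 11 (true twins): adding to `G` a set `X` of new vertices so that `{v} ∪ X`
is a set of pairwise true twins increases the star number by at most one. -/
theorem stmt_12 {V X : Type*} [Fintype V] [Fintype X] [Nonempty X]
    (G : SimpleGraph V) (v : V) (k : ℕ)
    (hg : starNumber G = k) :
    starNumber (addTrueTwins X G v) ≤ k + 1 := by
  have hne : {m | 0 < m ∧ Nonempty (StarWitness G m)}.Nonempty := by
    obtain ⟨m, hm, hw⟩ := exists_witness G
    exact ⟨m, hm, hw⟩
  have hmem := Nat.sInf_mem hne
  have hsk : sInf {m | 0 < m ∧ Nonempty (StarWitness G m)} = k := hg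
  rw [hsk] at hmem
  obtain ⟨hk, ⟨W⟩⟩ := hmem
  obtain ⟨W'⟩ := twin_witness (X := X) G v W
  exact Nat.sInf_le ⟨Nat.succ_pos _, ⟨W'⟩⟩
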